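/- For every real R > 0 and every α ∈ [0, π/2], the interval integral ∫ t in (R·cos α)..R, √(1 − R²·cos²α / t²) dt equals R·(sin α − α·cos α). (The action integral ∫_δ λ = 2R√(2E)(sin α − α cos α) in Section 5 for the radial loop δ of the disk billiard, after dividing by the factor 2√(2E).) -/

import Mathlib

open Real intervalIntegral Set

/-- **Section 5, action integral of the radial loop `δ` of the disk billiard** (after
dividing by the factor `2√(2E)`): for `R > 0` and `α ∈ [0, π/2]`,
`∫_{R cos α}^{R} √(1 − R² cos²α / t²) dt = R (sin α − α cos α)`. -/
theorem disk_billiard_action_integral (R α : ℝ) (hR : 0 < R)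
    (hα₀ : 0 ≤ α) (hα : α ≤ Real.pi / 2) :
    ∫ t in (R * Real.cos α)..R,
        Real.sqrt (1 - R ^ 2 * Real.cos α ^ 2 / t ^ 2)
      = R * (Real.sin α - α * Real.cos α) := by
  rcases eq_or_lt_of_le hα with h | h
  · subst h
    simp [Real.cos_pi_div_two, Real.sin_pi_div_two]
  · have hcos : 0 < Real.cos α := Real.cos_pos_of_mem_Ioo ⟨by linarith [Real.pi_pos], h⟩
    set S := R * Real.cos α with hS
    have hS0 : 0 < S := mul_pos hR hcos
    have hSR : S ≤ R := by
      have := Real.cos_le_one α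
      nlinarith
    set F : ℝ → ℝ := fun t => Real.sqrt (t ^ 2 - S ^ 2) + S * Real.arcsin (S / t) with hF
    have hsq : ∀ x : ℝ, 0 < x → Real.sqrt (1 - S ^ 2 / x ^ 2) = Real.sqrt (x ^ 2 - S ^ 2) / x := by
      intro x hx
      have h1 : 1 - S ^ 2 / x ^ 2 = (x ^ 2 - S ^ 2) / x ^ 2 := by
        field_simp
      rw [h1, Real.sqrt_div' _ (by positivity), Real.sqrt_sq hx.le]
    have hderiv : ∀ x ∈ Ioo S R,
        HasDerivAt F (Real.sqrt (1 - R ^ 2 * Real.cos α ^ 2 / x ^ 2)) x := by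
      intro x hx
      have hx0 : 0 < x := lt_trans hS0 hx.1
      have hpos : 0 < x ^ 2 - S ^ 2 := by nlinarith [hx.1]
      have h1 : HasDerivAt (fun t : ℝ => t ^ 2 - S ^ 2) (2 * x) x := by
        simpa using (hasDerivAt_pow 2 x).sub_const (S ^ 2)
      have hsqrt : HasDerivAt (fun t => Real.sqrt (t ^ 2 - S ^ 2))
          (2 * x / (2 * Real.sqrt (x ^ 2 - S ^ 2))) x := h1.sqrt hpos.ne'
      have hinv : HasDerivAt (fun t : ℝ => S / t) (S * -(x ^ 2)⁻¹) x := by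
        simpa [div_eq_mul_inv] using (hasDerivAt_inv hx0.ne').const_mul S
      have hlt : S / x < 1 := (div_lt_one hx0).2 hx.1
      have hpos' : (0:ℝ) < S / x := div_pos hS0 hx0
      have hne1 : S / x ≠ -1 := by intro hEq; rw [hEq] at hpos'; linarith
      have harc : HasDerivAt (fun t => Real.arcsin (S / t))
          (1 / Real.sqrt (1 - (S / x) ^ 2) * (S * -(x ^ 2)⁻¹)) x :=
        (Real.hasDerivAt_arcsin hne1 hlt.ne).comp x hinv
      have hFd : HasDerivAt F
          (2 * x / (2 * Real.sqrt (x ^ 2 - S ^ 2)) +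
            S * (1 / Real.sqrt (1 - (S / x) ^ 2) * (S * -(x ^ 2)⁻¹))) x :=
        hsqrt.add (harc.const_mul S)
      convert hFd using 1
      have hRS : R ^ 2 * Real.cos α ^ 2 = S ^ 2 := by rw [hS]; ring
      rw [hRS, hsq x hx0]
      have h2 : Real.sqrt (1 - (S / x) ^ 2) = Real.sqrt (x ^ 2 - S ^ 2) / x := by
        rw [div_pow]; exact hsq x hx0
      rw [h2]
      have hu : 0 < Real.sqrt (x ^ 2 - S ^ 2) := Real.sqrt_pos.2 hpos
      have hu2 : Real.sqrt (x ^ 2 - S ^ 2) ^ 2 = x ^ 2 - S ^ 2 := Real.sq_sqrt hpos.le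
      field_simp
      linear_combination hu2
    have hcont : ContinuousOn F (Icc S R) := by
      apply ContinuousOn.add
      · exact (Real.continuous_sqrt.comp (by continuity)).continuousOn
      · apply continuousOn_const.mul
        apply Real.continuous_arcsin.comp_continuousOn
        exact continuousOn_const.div continuousOn_id fun t ht => (lt_of_lt_of_le hS0 ht.1).ne'
    have hint : IntervalIntegrable
        (fun t => Real.sqrt (1 - R ^ 2 * Real.cos α ^ 2 / t ^ 2)) MeasureTheory.volume S R := by
      apply ContinuousOn.intervalIntegrable
      rw [uIcc_of_le hSR]
      apply ContinuousOn.sqrt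
      apply continuousOn_const.sub
      exact continuousOn_const.div (by fun_prop) fun t ht => pow_ne_zero 2 (hS0.trans_le ht.1).ne'
    have key := integral_eq_sub_of_hasDerivAt_of_le hSR hcont hderiv hint
    rw [key]
    have hFR : F R = R * Real.sin α + S * (Real.pi / 2 - α) := by
      have h1 : R ^ 2 - S ^ 2 = (R * Real.sin α) ^ 2 := by
        rw [hS]
        have := Real.sin_sq_add_cos_sq α
        nlinarith
      have h2 : S / R = Real.cos α := by field_simp [hS]; exact hS
      have h3 : Real.arcsin (Real.cos α) = Real.pi / 2 - α := by
        have h5 := Real.arccos_eq_pi_div_two_sub_arcsin (Real.cos α)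
        have h4 := Real.arccos_cos hα₀ (by linarith [Real.pi_pos])
        linarith
      simp only [hF, h1, h2, h3]
      rw [Real.sqrt_sq (mul_nonneg hR.le (Real.sin_nonneg_of_nonneg_of_le_pi hα₀ (by linarith [Real.pi_pos])))]
    have hFS : F S = S * (Real.pi / 2) := by
      simp [hF, div_self hS0.ne', Real.arcsin_one]
    rw [hFR, hFS, hS]
    ring
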